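/- For a junction joining two pipes of equal cross section, the coupling conditions single out the mirrored state: let Y₁ = (ρ₁, q₁, E₁) and Y₂ = (ρ₂, q₂, E₂) be subsonic gas states with positive densities and positive pressures. Then the three conditions q₁ + q₂ = 0, h₁ = h₂ and s₁ = s₂ hold simultaneously if and only if ρ₁ = ρ₂, q₁ = −q₂ and E₁ = E₂. -/

import Mathlib

lemma mono_aux (γ K Q a b : ℝ) (hγ : 1 < γ) (hK : 0 < K) (ha : 0 < a)
    (hab : a < b) (hQ : 0 ≤ Q) (hq : Q < γ * K * a ^ (γ + 1)) :
    γ / (γ - 1) * K * a ^ (γ - 1) + Q / (2 * a ^ 2) <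
      γ / (γ - 1) * K * b ^ (γ - 1) + Q / (2 * b ^ 2) := by
  set f : ℝ → ℝ := fun x => γ / (γ - 1) * K * x ^ (γ - 1) + Q / 2 * x ^ (-2 : ℝ) with hf
  have hb : 0 < b := ha.trans hab
  have key : ∀ x : ℝ, 0 < x →
      HasDerivAt f (γ / (γ - 1) * K * ((γ - 1) * x ^ (γ - 1 - 1)) + Q / 2 * ((-2) * x ^ ((-2 : ℝ) - 1))) x := by
    intro x hx
    exact ((Real.hasDerivAt_rpow_const (p := γ - 1) (Or.inl hx.ne')).const_mul _).add
      ((Real.hasDerivAt_rpow_const (p := (-2 : ℝ)) (Or.inl hx.ne')).const_mul _)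
  have hmono : StrictMonoOn f (Set.Ici a) := by
    apply strictMonoOn_of_deriv_pos (convex_Ici a)
    · intro x hx
      exact (key x (lt_of_lt_of_le ha hx)).continuousAt.continuousWithinAt
    · intro x hx
      rw [interior_Ici] at hx
      have hxpos : 0 < x := ha.trans hx
      rw [(key x hxpos).deriv]
      have h1 : x ^ (γ - 1 - 1) = x ^ (γ + 1) * x ^ (-3 : ℝ) := by
        rw [← Real.rpow_add hxpos]; ring_nf
      have h2 : x ^ ((-2 : ℝ) - 1) = x ^ (-3 : ℝ) := by norm_num
      have h3 : 0 < x ^ (-3 : ℝ) := Real.rpow_pos_of_pos hxpos _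
      have h4 : γ * K * a ^ (γ + 1) ≤ γ * K * x ^ (γ + 1) := by
        have := Real.rpow_le_rpow ha.le hx.le (by linarith : (0:ℝ) ≤ γ + 1)
        nlinarith [Real.rpow_pos_of_pos ha (γ + 1)]
      rw [h1, h2]
      have hγ1 : γ - 1 ≠ 0 := by linarith
      have heq : γ / (γ - 1) * K * ((γ - 1) * (x ^ (γ + 1) * x ^ (-3 : ℝ)))
          = γ * K * x ^ (γ + 1) * x ^ (-3 : ℝ) := by
        field_simp
      rw [heq]
      nlinarith
  have hlt := hmono (Set.mem_Ici.mpr le_rfl) (Set.mem_Ici.mpr hab.le) hab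
  have conv : ∀ x : ℝ, 0 < x → Q / 2 * x ^ (-2 : ℝ) = Q / (2 * x ^ 2) := by
    intro x hx
    rw [show (-2 : ℝ) = -((2:ℕ):ℝ) by norm_num, Real.rpow_neg hx.le, Real.rpow_natCast]
    field_simp
  rw [hf] at hlt
  simpa only [conv a ha, conv b hb] using hlt

lemma enthalpy_form (γ K ρ q E p : ℝ) (hγ1 : γ - 1 ≠ 0) (hρ : 0 < ρ)
    (hE : E = p / (γ - 1) + q ^ 2 / (2 * ρ)) (hpK : p = K * ρ ^ γ) :
    (E + p) / ρ = γ / (γ - 1) * K * ρ ^ (γ - 1) + q ^ 2 / (2 * ρ ^ 2) := by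
  have h3 : ρ ^ γ = ρ ^ (γ - 1) * ρ := by
    rw [← Real.rpow_add_one hρ.ne']; ring_nf
  have halg : ∀ A : ℝ, (K * (A * ρ) / (γ - 1) + q ^ 2 / (2 * ρ) + K * (A * ρ)) / ρ =
      γ / (γ - 1) * K * A + q ^ 2 / (2 * ρ ^ 2) := by
    intro A; field_simp; ring
  rw [hE, hpK, h3]
  exact halg _

/-- For a junction joining two pipes of equal cross section, the coupling conditions
`q₁ + q₂ = 0`, `h₁ = h₂`, `s₁ = s₂` hold for two subsonic states if and only if the
states are mirror images: `ρ₁ = ρ₂`, `q₁ = −q₂`, `E₁ = E₂`. -/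
theorem coupling_conditions_iff_mirrored_state
    (γ cv : ℝ) (hγ : 1 < γ) (hcv : 0 < cv)
    (ρ₁ q₁ E₁ ρ₂ q₂ E₂ p₁ p₂ : ℝ)
    (hρ₁ : 0 < ρ₁) (hρ₂ : 0 < ρ₂)
    (hp₁def : p₁ = (γ - 1) * (E₁ - q₁ ^ 2 / (2 * ρ₁)))
    (hp₂def : p₂ = (γ - 1) * (E₂ - q₂ ^ 2 / (2 * ρ₂)))
    (hp₁ : 0 < p₁) (hp₂ : 0 < p₂)
    (hsub₁ : |q₁ / ρ₁| < Real.sqrt (γ * p₁ / ρ₁))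
    (hsub₂ : |q₂ / ρ₂| < Real.sqrt (γ * p₂ / ρ₂)) :
    (q₁ + q₂ = 0 ∧ (E₁ + p₁) / ρ₁ = (E₂ + p₂) / ρ₂ ∧
        cv * Real.log (p₁ / ρ₁ ^ γ) = cv * Real.log (p₂ / ρ₂ ^ γ)) ↔
      (ρ₁ = ρ₂ ∧ q₁ = -q₂ ∧ E₁ = E₂) := by
  have hγ1 : γ - 1 ≠ 0 := by linarith
  have hE₁ : E₁ = p₁ / (γ - 1) + q₁ ^ 2 / (2 * ρ₁) := by
    rw [hp₁def]; field_simp; ring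
  have hE₂ : E₂ = p₂ / (γ - 1) + q₂ ^ 2 / (2 * ρ₂) := by
    rw [hp₂def]; field_simp; ring
  constructor
  · rintro ⟨hq, hh, hs⟩
    have hqs : q₁ = -q₂ := by linarith
    have hqsq : q₂ ^ 2 = q₁ ^ 2 := by rw [hqs]; ring
    -- entropy gives the same adiabatic constant
    have hx₁ : 0 < p₁ / ρ₁ ^ γ := div_pos hp₁ (Real.rpow_pos_of_pos hρ₁ γ)
    have hx₂ : 0 < p₂ / ρ₂ ^ γ := div_pos hp₂ (Real.rpow_pos_of_pos hρ₂ γ)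
    have hKeq : p₁ / ρ₁ ^ γ = p₂ / ρ₂ ^ γ := by
      have := mul_left_cancel₀ hcv.ne' hs
      exact Real.log_injOn_pos (Set.mem_Ioi.mpr hx₁) (Set.mem_Ioi.mpr hx₂) this
    obtain ⟨K, hK, hKp₁, hKp₂⟩ : ∃ K : ℝ, 0 < K ∧ p₁ = K * ρ₁ ^ γ ∧ p₂ = K * ρ₂ ^ γ := by
      refine ⟨p₁ / ρ₁ ^ γ, hx₁, ?_, ?_⟩
      · rw [div_mul_cancel₀ _ (Real.rpow_pos_of_pos hρ₁ γ).ne']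
      · rw [hKeq, div_mul_cancel₀ _ (Real.rpow_pos_of_pos hρ₂ γ).ne']
    -- subsonicity squared
    have hsq : ∀ ρ q p : ℝ, 0 < ρ → 0 < p → |q / ρ| < Real.sqrt (γ * p / ρ) →
        p = K * ρ ^ γ → q ^ 2 < γ * K * ρ ^ (γ + 1) := by
      intro ρ q p hρ hp hsub hpK
      have h1 : |q / ρ| ^ 2 < γ * p / ρ := (Real.lt_sqrt (abs_nonneg _)).mp hsub
      rw [sq_abs, div_pow] at h1
      have h2 : q ^ 2 < γ * p * ρ := by
        have hρ2 : (0:ℝ) < ρ ^ 2 := by positivity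
        rw [div_lt_div_iff₀ hρ2 hρ] at h1
        nlinarith
      have h3 : ρ ^ (γ + 1) = ρ ^ γ * ρ := Real.rpow_add_one hρ.ne' γ
      rw [h3]; rw [hpK] at h2; nlinarith
    have hq₁K : q₁ ^ 2 < γ * K * ρ₁ ^ (γ + 1) := hsq ρ₁ q₁ p₁ hρ₁ hp₁ hsub₁ hKp₁
    have hq₂K : q₁ ^ 2 < γ * K * ρ₂ ^ (γ + 1) := by
      rw [← hqsq]; exact hsq ρ₂ q₂ p₂ hρ₂ hp₂ hsub₂ hKp₂
    -- enthalpy in K-form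
    have heq : γ / (γ - 1) * K * ρ₁ ^ (γ - 1) + q₁ ^ 2 / (2 * ρ₁ ^ 2) =
        γ / (γ - 1) * K * ρ₂ ^ (γ - 1) + q₁ ^ 2 / (2 * ρ₂ ^ 2) := by
      rw [← enthalpy_form γ K ρ₁ q₁ E₁ p₁ hγ1 hρ₁ hE₁ hKp₁, ← hqsq, ← enthalpy_form γ K ρ₂ q₂ E₂ p₂ hγ1 hρ₂ hE₂ hKp₂]
      exact hh
    have hρeq : ρ₁ = ρ₂ := by
      rcases lt_trichotomy ρ₁ ρ₂ with h | h | h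
      · exact absurd heq (ne_of_lt (mono_aux γ K (q₁ ^ 2) ρ₁ ρ₂ hγ hK hρ₁ h (sq_nonneg _) hq₁K))
      · exact h
      · exact absurd heq.symm
          (ne_of_lt (mono_aux γ K (q₁ ^ 2) ρ₂ ρ₁ hγ hK hρ₂ h (sq_nonneg _) hq₂K))
    have hpeq : p₁ = p₂ := by rw [hKp₁, hKp₂, hρeq]
    refine ⟨hρeq, hqs, ?_⟩
    rw [hE₁, hE₂, hpeq, hρeq, hqsq]
  · rintro ⟨hρ, hq, hE⟩
    have hqsq : q₁ ^ 2 = q₂ ^ 2 := by rw [hq]; ring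
    have hpeq : p₁ = p₂ := by rw [hp₁def, hp₂def, hρ, hE, hqsq]
    refine ⟨by linarith, by rw [hρ, hE, hpeq], by rw [hρ, hpeq]⟩
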